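/- Let n ≥ 2 and let f : ℂⁿ → ℝ be a generalized frame function which is odd (f(-v) = -f(v) for all v) and sublinear (f(v)/‖v‖ → 0 as ‖v‖ → ∞). Then f ≡ 0. -/

import Mathlib

open scoped InnerProductSpace

/-- A function `f : ℂⁿ → ℝ` is sublinear if `f(v)/‖v‖ → 0` as `‖v‖ → ∞`. -/
def SublinearCn {n : ℕ} (f : EuclideanSpace ℂ (Fin n) → ℝ) : Prop :=
  Filter.Tendsto (fun v => f v / ‖v‖)
    (Filter.comap (fun v : EuclideanSpace ℂ (Fin n) => ‖v‖) Filter.atTop) (nhds 0)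

lemma exists_orth {n : ℕ} (hn : 2 ≤ n) (v : EuclideanSpace ℂ (Fin n)) (hv : v ≠ 0) :
    ∃ w : EuclideanSpace ℂ (Fin n), w ≠ 0 ∧ ⟪v, w⟫_ℂ = 0 ∧ ‖w‖ = ‖v‖ := by
  have hdim : Module.finrank ℂ (ℂ ∙ v) + Module.finrank ℂ (ℂ ∙ v)ᗮ =
      Module.finrank ℂ (EuclideanSpace ℂ (Fin n)) :=
    Submodule.finrank_add_finrank_orthogonal _
  rw [finrank_euclideanSpace_fin, finrank_span_singleton hv] at hdim
  have hpos : 0 < Module.finrank ℂ (ℂ ∙ v)ᗮ := by omega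
  obtain ⟨w0, hw0mem, hw0⟩ : ∃ w0, w0 ∈ (ℂ ∙ v)ᗮ ∧ w0 ≠ 0 := by
    apply Submodule.exists_mem_ne_zero_of_ne_bot
    intro h
    rw [h] at hpos
    simp at hpos
  refine ⟨((‖v‖ / ‖w0‖ : ℝ) : ℂ) • w0, ?_, ?_, ?_⟩
  · simp only [ne_eq, smul_eq_zero, not_or]
    refine ⟨?_, hw0⟩
    simp [div_eq_zero_iff, norm_eq_zero, hv, norm_ne_zero_iff.mpr hw0]
  · rw [inner_smul_right]
    have : ⟪v, w0⟫_ℂ = 0 := by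
      have := hw0mem v (Submodule.mem_span_singleton_self v)
      simpa [inner_eq_zero_symm] using this
    simp [this]
  · rw [norm_smul]
    simp [norm_div, abs_of_nonneg (norm_nonneg v),
      div_mul_cancel₀ _ (norm_ne_zero_iff.mpr hw0)]

/-- Every odd sublinear generalized frame function on ℂⁿ, n ≥ 2, is trivial. -/
theorem odd_sublinear_generalized_frame_function_trivial
    (n : ℕ) (hn : 2 ≤ n) (f : EuclideanSpace ℂ (Fin n) → ℝ)
    (hf0 : f 0 = 0)
    (hframe : ∀ u v : EuclideanSpace ℂ (Fin n), u ≠ 0 → v ≠ 0 → ⟪u, v⟫_ℂ = 0 →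
      f (u + v) = f u + f v)
    (hodd : ∀ v, f (-v) = -f v)
    (hsub : SublinearCn f) :
    ∀ v, f v = 0 := by
  -- Step 1: doubling
  have hdouble : ∀ v : EuclideanSpace ℂ (Fin n), v ≠ 0 → f ((2 : ℂ) • v) = 2 * f v := by
    intro v hv
    obtain ⟨w, hw, hvw, hnorm⟩ := exists_orth hn v hv
    have hwv : ⟪w, v⟫_ℂ = 0 := by rwa [inner_eq_zero_symm]
    have hsum : v + w ≠ 0 := by
      intro h
      have : w = -v := by linear_combination (norm := module) h
      rw [this, inner_neg_right, neg_eq_zero] at hvw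
      exact (inner_self_ne_zero.mpr hv) hvw
    have hdiff : v - w ≠ 0 := by
      intro h
      have : w = v := by linear_combination (norm := module) -h
      rw [this] at hvw
      exact (inner_self_ne_zero.mpr hv) hvw
    have horth : ⟪v + w, v - w⟫_ℂ = 0 := by
      rw [inner_add_left, inner_sub_right, inner_sub_right]
      have h1 : ⟪v, v⟫_ℂ = (‖v‖ : ℂ)^2 := by
        rw [inner_self_eq_norm_sq_to_K]; norm_cast
      have h2 : ⟪w, w⟫_ℂ = (‖w‖ : ℂ)^2 := by
        rw [inner_self_eq_norm_sq_to_K]; norm_cast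
      rw [h1, h2, hvw, hwv, hnorm]
      ring
    have key : f ((v + w) + (v - w)) = f (v + w) + f (v - w) :=
      hframe _ _ hsum hdiff horth
    have e1 : (v + w) + (v - w) = (2 : ℂ) • v := by module
    have e2 : f (v + w) = f v + f w := hframe v w hv hw hvw
    have e3 : f (v - w) = f v - f w := by
      have : ⟪v, -w⟫_ℂ = 0 := by rw [inner_neg_right, hvw, neg_zero]
      have := hframe v (-w) hv (neg_ne_zero.mpr hw) this
      rw [hodd] at this
      rw [sub_eq_add_neg, this]
      ring
    rw [e1, e2, e3] at key
    rw [key]; ring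
  -- Step 2: iterate
  have hiter : ∀ (v : EuclideanSpace ℂ (Fin n)), v ≠ 0 → ∀ k : ℕ,
      f ((2 : ℂ)^k • v) = 2^k * f v := by
    intro v hv k
    induction k with
    | zero => simp
    | succ k ih =>
      have hne : (2 : ℂ)^k • v ≠ 0 := by
        simp [smul_eq_zero, hv, pow_ne_zero]
      have := hdouble _ hne
      rw [smul_smul] at this
      have e : (2 : ℂ) * (2 : ℂ)^k = (2 : ℂ)^(k+1) := by ring
      rw [e] at this
      rw [this, ih]
      ring
  -- Step 3: sublinearity
  intro v
  by_cases hv : v = 0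
  · rw [hv, hf0]
  · set g : ℕ → EuclideanSpace ℂ (Fin n) := fun k => (2 : ℂ)^k • v with hg
    have hnormg : ∀ k, ‖g k‖ = 2^k * ‖v‖ := by
      intro k
      simp [hg, norm_smul, norm_pow]
    have htends : Filter.Tendsto g Filter.atTop
        (Filter.comap (fun v : EuclideanSpace ℂ (Fin n) => ‖v‖) Filter.atTop) := by
      rw [Filter.tendsto_comap_iff]
      have : (fun v : EuclideanSpace ℂ (Fin n) => ‖v‖) ∘ g = fun k => 2^k * ‖v‖ := by
        funext k; exact hnormg k
      rw [this]
      exact (tendsto_pow_atTop_atTop_of_one_lt (by norm_num : (1:ℝ) < 2)).atTop_mul_const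
        (norm_pos_iff.mpr hv)
    have hlim : Filter.Tendsto (fun k => f (g k) / ‖g k‖) Filter.atTop (nhds 0) :=
      hsub.comp htends
    have hconst : (fun k => f (g k) / ‖g k‖) = fun _ => f v / ‖v‖ := by
      funext k
      rw [hnormg k, hg]
      simp only
      rw [hiter v hv k]
      rw [mul_div_mul_left _ _ (by positivity : (2:ℝ)^k ≠ 0)]
    rw [hconst] at hlim
    have := tendsto_nhds_unique hlim tendsto_const_nhds
    have hn0 : ‖v‖ ≠ 0 := norm_ne_zero_iff.mpr hv
    field_simp at this
    linarith [this]
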